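/- For the profile with one agent at 0 and n-1 agents at 1, all in a single group, the leftmost mechanism (placing the facility at the leftmost reported location, i.e., at 0) achieves maximum total group cost n-1, while placing the facility at 1 achieves the optimal maximum total group cost of 1. Hence the leftmost mechanism has approximation ratio at least n-1 for mtgc. -/

import Mathlib

open Finset

variable {n m : ℕ}

/-- Members of group `j`. -/
def grp (g : Fin n → Fin m) (j : Fin m) : Finset (Fin n) :=
  Finset.univ.filter (fun i => g i = j)

/-- Maximum total group cost. -/
noncomputable def mtgc (x : Fin n → ℝ) (g : Fin n → Fin m) (y : ℝ) : ℝ :=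
  ⨆ j : Fin m, ∑ i ∈ grp g j, |y - x i|

/-- Maximum average group cost. -/
noncomputable def magc (x : Fin n → ℝ) (g : Fin n → Fin m) (y : ℝ) : ℝ :=
  ⨆ j : Fin m, (∑ i ∈ grp g j, |y - x i|) / (grp g j).card

/-- Left median of a multiset of reals (`⌈k/2⌉`-th smallest). -/
noncomputable def medianOf (s : Multiset ℝ) : ℝ :=
  (s.sort (· ≤ ·)).getD ((Multiset.card s - 1) / 2) 0

/-- Left median of the locations of the members of group `j`. -/
noncomputable def groupMedian (x : Fin n → ℝ) (g : Fin n → Fin m) (j : Fin m) : ℝ :=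
  medianOf ((grp g j).val.map x)

/-- A largest group, ties broken by the smallest index. -/
noncomputable def majGroup (g : Fin n → Fin m) [NeZero m] : Fin m :=
  (Finset.univ.filter
    (fun j => ∀ k : Fin m, (grp g k).card ≤ (grp g j).card)).min' (by
      obtain ⟨b, -, hb⟩ :=
        Finset.exists_max_image Finset.univ (fun j => (grp g j).card) Finset.univ_nonempty
      exact ⟨b, Finset.mem_filter.mpr ⟨Finset.mem_univ _, fun k => hb k (Finset.mem_univ k)⟩⟩)

/-- Majority Group Deterministic Mechanism. -/
noncomputable def MGDM (x : Fin n → ℝ) (g : Fin n → Fin m) [NeZero m] : ℝ :=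
  groupMedian x g (majGroup g)

noncomputable def avgc (x : Fin n → ℝ) (g : Fin n → Fin m) (j : Fin m) (y : ℝ) : ℝ :=
  (∑ i ∈ grp g j, |y - x i|) / (grp g j).card

noncomputable def maxc (x : Fin n → ℝ) (g : Fin n → Fin m) (j : Fin m) (y : ℝ) : ℝ :=
  sSup ((fun i => |y - x i|) '' {i | g i = j})

noncomputable def minc (x : Fin n → ℝ) (g : Fin n → Fin m) (j : Fin m) (y : ℝ) : ℝ :=
  sInf ((fun i => |y - x i|) '' {i | g i = j})

noncomputable def IIF1 (x : Fin n → ℝ) (g : Fin n → Fin m) (y : ℝ) : ℝ :=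
  (⨆ j : Fin m, avgc x g j y) + ⨆ j : Fin m, (maxc x g j y - minc x g j y)
/-- With one agent at `0` and `n - 1` agents at `1`, all in a single group,
the leftmost mechanism (facility at `0`) gets `mtgc = n - 1` while `1` is
optimal with value `1`; hence LDM has approximation ratio at least `n - 1`. -/
theorem stmt6 (n : ℕ) (hn : 2 ≤ n) (x : Fin n → ℝ) (g : Fin n → Fin 1)
    (hx : ∀ i : Fin n, x i = if (i : ℕ) = 0 then 0 else 1) :
    mtgc x g 0 = (n : ℝ) - 1 ∧ mtgc x g 1 = 1 ∧ ∀ y : ℝ, 1 ≤ mtgc x g y := by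
  have hgrp : ∀ j : Fin 1, grp g j = Finset.univ := by
    intro j
    ext i
    simp [grp, Subsingleton.elim (g i) j]
  have hcard : (Finset.univ.filter (fun i : Fin n => (i : ℕ) = 0)).card = 1 := by
    have : (Finset.univ.filter (fun i : Fin n => (i : ℕ) = 0)) = {⟨0, by omega⟩} := by
      ext i
      simp [Fin.ext_iff]
    rw [this]; simp
  have hsum : ∀ y : ℝ, mtgc x g y = |y| + (n - 1 : ℝ) * |y - 1| := by
    intro y
    have : mtgc x g y = ∑ i ∈ grp g (0 : Fin 1), |y - x i| := by
      unfold mtgc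
      exact ciSup_unique
    rw [this, hgrp]
    have : ∀ i : Fin n, |y - x i| = if (i : ℕ) = 0 then |y| else |y - 1| := by
      intro i; rw [hx i]; split <;> simp
    rw [Finset.sum_congr rfl (fun i _ => this i), Finset.sum_ite,
      Finset.sum_const, Finset.sum_const, hcard]
    have hcard2 : (Finset.univ.filter (fun i : Fin n => ¬ (i : ℕ) = 0)).card = n - 1 := by
      have := Finset.card_filter_add_card_filter_not
        (s := (Finset.univ : Finset (Fin n))) (p := fun i : Fin n => (i : ℕ) = 0)
      simp only [Finset.card_univ, Fintype.card_fin] at this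
      omega
    rw [hcard2]
    simp only [nsmul_eq_mul, one_mul]
    have h1n : (1:ℕ) ≤ n := by omega
    push_cast [h1n]
    ring
  refine ⟨?_, ?_, ?_⟩
  · rw [hsum]; simp [abs_of_nonpos]
  · rw [hsum]; simp
  · intro y
    rw [hsum]
    have h1 : |y| + |y - 1| ≥ 1 := by
      have := abs_sub_abs_le_abs_sub y (y - 1)
      have h2 := abs_sub (y) (y-1)
      calc (1:ℝ) = |y - (y - 1)| := by norm_num
        _ ≤ |y| + |y - 1| := abs_sub _ _
    nlinarith [abs_nonneg (y - 1), abs_nonneg y, show (1:ℝ) ≤ (n:ℝ) - 1 by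
      have : (2:ℝ) ≤ (n:ℝ) := by exact_mod_cast hn
      linarith]
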